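/- Multiclass robustness certificate: let W ∈ ℝ^{p×K} with columns W₁,…,W_K, c_W = max_{i≠j}‖W_i − W_j‖₂, and suppose the feature stability bound ‖φ_D(x) − φ_D(x+v)‖₂ ≤ ν/√(1−η_s) holds for all ‖v‖₂ ≤ ν. If the multiclass margin ρ_x = W_yᵀφ_D(x) − max_{j≠y} W_jᵀφ_D(x) satisfies ρ_x > c_W·ν/√(1−η_s), then argmax_j W_jᵀφ_D(x+v) = y for all ‖v‖₂ ≤ ν. -/
import Mathlib


open scoped BigOperators
open Finset

noncomputable def l2 {n : ℕ} (x : Fin n → ℝ) : ℝ := Real.sqrt (∑ i, (x i) ^ 2)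

noncomputable def l1 {n : ℕ} (x : Fin n → ℝ) : ℝ := ∑ i, |x i|

noncomputable def inp {n : ℕ} (x y : Fin n → ℝ) : ℝ := ∑ i, x i * y i

/-- The Lasso objective `z ↦ (1/2)‖x − Dz‖₂² + λ‖z‖₁`. -/
noncomputable def lassoObj {d p : ℕ} (D : Matrix (Fin d) (Fin p) ℝ) (lam : ℝ)
    (x : Fin d → ℝ) (z : Fin p → ℝ) : ℝ :=
  (1 / 2) * (l2 (x - D.mulVec z)) ^ 2 + lam * l1 z

lemma inp_le_l2_mul_l2 {n : ℕ} (a b : Fin n → ℝ) : inp a b ≤ l2 a * l2 b :=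
  Real.sum_mul_le_sqrt_mul_sqrt _ _ _

lemma l2_nonneg {n : ℕ} (a : Fin n → ℝ) : 0 ≤ l2 a := Real.sqrt_nonneg _

/-- multiclass robustness certificate. -/
theorem stmt13 {d p K : ℕ} (φ : (Fin d → ℝ) → Fin p → ℝ)
    (η ν cW ρ : ℝ) (hη0 : 0 ≤ η) (hη : η < 1) (hν : 0 ≤ ν)
    (W : Fin K → Fin p → ℝ)
    (hcW : ∀ i j, i ≠ j → l2 (W i - W j) ≤ cW)
    (x : Fin d → ℝ) (y : Fin K)
    (hstab : ∀ v : Fin d → ℝ, l2 v ≤ ν →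
      l2 (φ x - φ (x + v)) ≤ ν / Real.sqrt (1 - η))
    (hρ : ∀ j, j ≠ y → ρ ≤ inp (W y) (φ x) - inp (W j) (φ x))
    (hmargin : cW * ν / Real.sqrt (1 - η) < ρ) :
    ∀ v : Fin d → ℝ, l2 v ≤ ν →
      ∀ j, j ≠ y → inp (W j) (φ (x + v)) < inp (W y) (φ (x + v)) := by
  intro v hv j hj
  have hs : 0 < Real.sqrt (1 - η) := Real.sqrt_pos.2 (by linarith)
  have hcW0 : 0 ≤ cW := le_trans (l2_nonneg (W y - W j)) (hcW y j (Ne.symm hj))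
  -- key: inp (W y - W j) (φ x - φ (x+v)) ≤ cW * (ν / √(1-η))
  have hcs : inp (W y - W j) (φ x - φ (x + v)) ≤ cW * (ν / Real.sqrt (1 - η)) := by
    calc inp (W y - W j) (φ x - φ (x + v))
        ≤ l2 (W y - W j) * l2 (φ x - φ (x + v)) := inp_le_l2_mul_l2 _ _
      _ ≤ cW * (ν / Real.sqrt (1 - η)) := by
          apply mul_le_mul (hcW y j (Ne.symm hj)) (hstab v hv) (l2_nonneg _) hcW0
  have hexp : inp (W y - W j) (φ x - φ (x + v))
      = (inp (W y) (φ x) - inp (W j) (φ x))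
        - (inp (W y) (φ (x + v)) - inp (W j) (φ (x + v))) := by
    simp only [inp, Pi.sub_apply]
    rw [← Finset.sum_sub_distrib, ← Finset.sum_sub_distrib, ← Finset.sum_sub_distrib]
    apply Finset.sum_congr rfl
    intro i _
    ring
  have h1 := hρ j hj
  have hm : cW * (ν / Real.sqrt (1 - η)) < ρ := by
    rw [← mul_div_assoc]; exact hmargin
  linarith [hexp ▸ hcs]
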